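/- For a linear model through a softmax-free score, replicating a feature splits its integrated gradient attribution: let g(w) = a₁·max{w₁, …, w_t} + ∑_{j>t} a_j w_j on [0,1]^n with a₁ > 0. Then integrated gradients with baseline 0 and input 𝟏 assigns each of the first t coordinates attribution a₁/t, while each coordinate j > t receives a_j. In particular, if a₁/t < a_j < a₁ for some j > t, the redundant copies of the strongest feature are each out-ranked or the top-k selection can be manipulated by choosing t. -/

import Mathlib

/-- Feature replication splits attribution: for
`g(w) = a₁·max{w₁,…,w_t} + ∑_{j>t} a_j w_j` with `a₁ > 0`, integrated
gradients with baseline `0` and input `𝟏` (interpreting the derivative of the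
max symmetrically along the diagonal, so that the `t` redundant copies share
the attribution of the max term equally) assigns each of the first `t`
coordinates attribution `a₁/t` and each coordinate `j > t` attribution `a_j`.
In particular, if `a₁/t < a_j` for some `j > t`, each redundant copy of the
strongest feature is out-ranked by feature `j`. -/
theorem stmt_19 {n : ℕ} (t : ℕ) (ht : 1 ≤ t) (htn : t ≤ n)
    (hne : (Finset.univ.filter fun k : Fin n => (k : ℕ) < t).Nonempty)
    (a1 : ℝ) (ha1 : 0 < a1) (a : Fin n → ℝ)
    (g : (Fin n → ℝ) → ℝ)
    (hg : ∀ w : Fin n → ℝ,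
      g w = a1 * (Finset.univ.filter fun k : Fin n => (k : ℕ) < t).sup' hne w +
        ∑ j ∈ Finset.univ.filter fun j : Fin n => t ≤ (j : ℕ), a j * w j)
    (A : Fin n → ℝ)
    (hA : ∀ i : Fin n, A i =
      if (i : ℕ) < t then
        (1 / (t : ℝ)) * ∫ s in (0:ℝ)..1,
          deriv (fun u : ℝ => g fun k : Fin n => if (k : ℕ) < t then u else s) s
      else
        ∫ s in (0:ℝ)..1,
          deriv (fun u : ℝ => g (Function.update (fun _ : Fin n => s) i u)) s) :
    (∀ i : Fin n, (i : ℕ) < t → A i = a1 / t) ∧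
      (∀ j : Fin n, t ≤ (j : ℕ) → A j = a j) ∧
      (∀ i j : Fin n, (i : ℕ) < t → t ≤ (j : ℕ) → a1 / t < a j → A i < A j) := by
  have key1 : ∀ i : Fin n, (i : ℕ) < t → A i = a1 / t := by
    intro i hi
    rw [hA i, if_pos hi]
    have hderiv : ∀ s : ℝ,
        deriv (fun u : ℝ => g fun k : Fin n => if (k : ℕ) < t then u else s) s = a1 := by
      intro s
      have hfun : (fun u : ℝ => g fun k : Fin n => if (k : ℕ) < t then u else s) =
          fun u : ℝ => a1 * u +
            ∑ j ∈ Finset.univ.filter fun j : Fin n => t ≤ (j : ℕ), a j * s := by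
        funext u
        rw [hg]
        congr 1
        · congr 1
          rw [Finset.sup'_congr hne rfl (g := fun _ => u) (fun k hk => by
            simp only [Finset.mem_filter] at hk
            simp [hk.2])]
          exact Finset.sup'_const hne u
        · refine Finset.sum_congr rfl fun j hj => ?_
          simp only [Finset.mem_filter] at hj
          rw [if_neg (by omega)]
      rw [hfun]
      have h := ((hasDerivAt_id s).const_mul a1).add_const
        (∑ j ∈ Finset.univ.filter fun j : Fin n => t ≤ (j : ℕ), a j * s)
      simpa using h.deriv
    rw [intervalIntegral.integral_congr (g := fun _ => a1) (fun s _ => hderiv s)]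
    rw [intervalIntegral.integral_const]
    have htpos : (0:ℝ) < t := by exact_mod_cast ht
    field_simp
    simp
  have key2 : ∀ j : Fin n, t ≤ (j : ℕ) → A j = a j := by
    intro j hj
    rw [hA j, if_neg (by omega)]
    have hderiv : ∀ s : ℝ,
        deriv (fun u : ℝ => g (Function.update (fun _ : Fin n => s) j u)) s = a j := by
      intro s
      have hjmem : j ∈ Finset.univ.filter fun k : Fin n => t ≤ (k : ℕ) := by
        simp [hj]
      have hfun : (fun u : ℝ => g (Function.update (fun _ : Fin n => s) j u)) =
          fun u : ℝ => a j * u + (a1 * s +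
            ∑ k ∈ (Finset.univ.filter fun k : Fin n => t ≤ (k : ℕ)).erase j, a k * s) := by
        funext u
        rw [hg]
        have hsup : (Finset.univ.filter fun k : Fin n => (k : ℕ) < t).sup'
            hne (Function.update (fun _ : Fin n => s) j u) = s := by
          rw [Finset.sup'_congr hne rfl (g := fun _ => s) (fun k hk => by
            simp only [Finset.mem_filter] at hk
            have : k ≠ j := by
              intro h; rw [h] at hk; omega
            simp [Function.update_of_ne this])]
          exact Finset.sup'_const hne s
        rw [hsup]
        rw [← Finset.add_sum_erase _ _ hjmem]
        have hrest : ∀ k ∈ (Finset.univ.filter fun k : Fin n => t ≤ (k : ℕ)).erase j,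
            a k * Function.update (fun _ : Fin n => s) j u k = a k * s := by
          intro k hk
          rw [Function.update_of_ne (Finset.ne_of_mem_erase hk)]
        rw [Finset.sum_congr rfl hrest, Function.update_self]
        ring
      rw [hfun]
      have h := ((hasDerivAt_id s).const_mul (a j)).add_const
        (a1 * s + ∑ k ∈ (Finset.univ.filter fun k : Fin n => t ≤ (k : ℕ)).erase j, a k * s)
      simpa using h.deriv
    rw [intervalIntegral.integral_congr (g := fun _ => a j) (fun s _ => hderiv s)]
    simp
  refine ⟨key1, key2, fun i j hi hj hlt => ?_⟩
  rw [key1 i hi, key2 j hj]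
  exact hlt
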